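/- For every a : ZMod d × ZMod d → ℂ with Σ_{r,s} |a_{r,s}|² = 1, the operator P_a commutes with the covariance representation: P_a · (U_{p,q} ⊗ U_{p,q} ⊗ conj(U_{p,q})) = (U_{p,q} ⊗ U_{p,q} ⊗ conj(U_{p,q})) · P_a for all p, q ∈ ZMod d. -/

import Mathlib

open Matrix Kronecker BigOperators

/-- ω = exp(2πi/d). -/
noncomputable def omega (d : ℕ) : ℂ := Complex.exp (2 * Real.pi * Complex.I / d)

/-- The Weyl–Heisenberg matrix `U_{p,q}`. -/
noncomputable def WH (d : ℕ) [NeZero d] (p q : ZMod d) : Matrix (ZMod d) (ZMod d) ℂ :=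
  fun j k => if j = k + p then omega d ^ (q.val * k.val) else 0

/-- The operator `P_a` on `(ℂ^d)^⊗3` associated to the coefficients `a`:
`(P_a)_{(i,j,k),(i',j',k')} = (1/d) Σ_{r,s,r',s'} a_{rs} conj(a_{r's'})
  (U_{rs}ᴴ U_{r's'})_{i,i'} (U_{rs})_{j,k} conj((U_{r's'})_{j',k'})`. -/
noncomputable def Pa (d : ℕ) [NeZero d] (a : ZMod d × ZMod d → ℂ) :
    Matrix (ZMod d × ZMod d × ZMod d) (ZMod d × ZMod d × ZMod d) ℂ :=
  fun x y => (d : ℂ)⁻¹ * ∑ r : ZMod d, ∑ s : ZMod d, ∑ r' : ZMod d, ∑ s' : ZMod d,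
    a (r, s) * (starRingEnd ℂ) (a (r', s')) * ((WH d r s)ᴴ * WH d r' s') x.1 y.1 *
      WH d r s x.2.1 x.2.2 * (starRingEnd ℂ) (WH d r' s' y.2.1 y.2.2)

noncomputable def zeta (d : ℕ) (x : ZMod d) : ℂ := omega d ^ x.val

lemma omega_pow_d (d : ℕ) [NeZero d] : omega d ^ d = 1 := by
  rw [omega, ← Complex.exp_nat_mul]
  have hd : (d:ℂ) ≠ 0 := by exact_mod_cast (NeZero.ne d)
  rw [show (d:ℂ) * (2 * Real.pi * Complex.I / d) = 2 * Real.pi * Complex.I by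
    field_simp]
  exact Complex.exp_two_pi_mul_I

lemma omega_pow_natCast (d : ℕ) [NeZero d] (n : ℕ) : omega d ^ n = zeta d n := by
  conv_lhs => rw [← Nat.mod_add_div n d]
  rw [pow_add, pow_mul, omega_pow_d, one_pow, mul_one, zeta, ZMod.val_natCast]

lemma zeta_add (d : ℕ) [NeZero d] (x y : ZMod d) :
    zeta d (x + y) = zeta d x * zeta d y := by
  have : zeta d x * zeta d y = omega d ^ (x.val + y.val) := by
    rw [pow_add]; rfl
  rw [this, omega_pow_natCast]
  congr 1
  simp [ZMod.natCast_val, ZMod.cast_id]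

lemma zeta_zero (d : ℕ) : zeta d 0 = 1 := by simp [zeta]

lemma omega_ne_zero (d : ℕ) : omega d ≠ 0 := Complex.exp_ne_zero _

lemma star_omega (d : ℕ) : star (omega d) = (omega d)⁻¹ := by
  rw [omega, ← Complex.exp_neg, RCLike.star_def, ← Complex.exp_conj]
  congr 1
  simp only [map_div₀, _root_.map_mul, Complex.conj_I, Complex.conj_ofReal, map_ofNat, Complex.conj_natCast]
  ring

lemma star_zeta (d : ℕ) [NeZero d] (x : ZMod d) : star (zeta d x) = zeta d (-x) := by
  have h1 : zeta d x * zeta d (-x) = 1 := by rw [← zeta_add]; simp [zeta_zero]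
  have h2 : star (zeta d x) * zeta d x = 1 := by
    rw [zeta, star_pow, star_omega, ← mul_pow, inv_mul_cancel₀ (omega_ne_zero d), one_pow]
  calc star (zeta d x) = star (zeta d x) * (zeta d x * zeta d (-x)) := by rw [h1, mul_one]
    _ = (star (zeta d x) * zeta d x) * zeta d (-x) := by ring
    _ = zeta d (-x) := by rw [h2, one_mul]

lemma WH_apply (d : ℕ) [NeZero d] (p q j k : ZMod d) :
    WH d p q j k = if j = k + p then zeta d (q * k) else 0 := by
  rw [WH]
  split
  · rw [omega_pow_natCast]
    congr 1
    push_cast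
    simp [ZMod.natCast_val, ZMod.cast_id]
  · rfl

lemma WH_mul (d : ℕ) [NeZero d] (p q r s : ZMod d) :
    WH d p q * WH d r s = zeta d (q * r) • WH d (p + r) (q + s) := by
  ext j l
  rw [mul_apply]
  simp only [WH_apply, Matrix.smul_apply, smul_eq_mul]
  have h1 : ∀ k : ZMod d,
      (if j = k + p then zeta d (q * k) else 0) * (if k = l + r then zeta d (s * l) else 0)
        = if k = l + r then (if j = k + p then zeta d (q * k) * zeta d (s * l) else 0) else 0 := by
    intro k; split_ifs <;> ring
  rw [Finset.sum_congr rfl fun k _ => h1 k, Finset.sum_ite_eq' Finset.univ (l + r)]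
  simp only [Finset.mem_univ, if_true]
  by_cases h : j = l + r + p
  · rw [if_pos h, if_pos (by rw [h]; ring)]
    rw [← zeta_add, ← zeta_add]
    congr 1; ring
  · rw [if_neg h, if_neg (by intro hc; exact h (by rw [hc]; ring)), mul_zero]

lemma WH_conjTranspose (d : ℕ) [NeZero d] (p q : ZMod d) :
    (WH d p q)ᴴ = zeta d (q * p) • WH d (-p) (-q) := by
  ext j k
  rw [conjTranspose_apply]
  simp only [WH_apply, Matrix.smul_apply, smul_eq_mul]
  by_cases h : k = j + p
  · rw [if_pos h, if_pos (by rw [h]; ring)]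
    rw [star_zeta, ← zeta_add]
    congr 1; rw [h]; ring
  · rw [if_neg h, if_neg (by intro hc; exact h (by rw [hc]; ring)), star_zero, mul_zero]

lemma zeta_mul_zeta (d : ℕ) [NeZero d] (x y : ZMod d) :
    zeta d x * zeta d y = zeta d (x + y) := (zeta_add d x y).symm

lemma conj1 (d : ℕ) [NeZero d] (p q r' s' : ZMod d) :
    (WH d p q)ᴴ * (WH d r' s' * WH d p q) = zeta d (s' * p - q * r') • WH d r' s' := by
  rw [WH_mul, WH_conjTranspose, mul_smul_comm, smul_mul_assoc, smul_smul, WH_mul, smul_smul]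
  rw [show -p + (r' + p) = r' by ring, show -q + (s' + q) = s' by ring]
  congr 1
  rw [zeta_mul_zeta, zeta_mul_zeta]
  congr 1; ring

lemma conj2 (d : ℕ) [NeZero d] (p q r s : ZMod d) :
    WH d p q * (WH d r s * (WH d p q)ᴴ) = zeta d (q * r - s * p) • WH d r s := by
  rw [WH_conjTranspose, mul_smul_comm, WH_mul, mul_smul_comm, mul_smul_comm, WH_mul, smul_smul, smul_smul]
  rw [show p + (r + -p) = r by ring, show q + (s + -q) = s by ring]
  congr 1
  rw [zeta_mul_zeta, zeta_mul_zeta]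
  congr 1; ring

lemma Wlem (d : ℕ) [NeZero d] (r s r' s' : ZMod d) :
    (WH d r s)ᴴ * WH d r' s' = zeta d (s * r - s * r') • WH d (-r + r') (-s + s') := by
  rw [WH_conjTranspose, smul_mul_assoc, WH_mul, smul_smul, zeta_mul_zeta]
  congr 1; ring

noncomputable def Mmat (d : ℕ) [NeZero d] (r s r' s' : ZMod d) :
    Matrix (ZMod d × ZMod d) (ZMod d × ZMod d) ℂ :=
  fun x y => WH d r s x.1 x.2 * star (WH d r' s' y.1 y.2)

lemma Mmat_mul_V (d : ℕ) [NeZero d] (p q r s r' s' : ZMod d) :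
    Mmat d r s r' s' * (WH d p q ⊗ₖ (WH d p q).map (starRingEnd ℂ))
      = zeta d (q * r' - s' * p) • Mmat d r s r' s' := by
  ext ⟨j, k⟩ ⟨j', k'⟩
  rw [mul_apply]
  have step1 : ∀ x : (ZMod d × ZMod d),
      Mmat d r s r' s' (j, k) x * (WH d p q ⊗ₖ (WH d p q).map (starRingEnd ℂ)) x (j', k')
        = WH d r s j k *
          star (star (WH d p q x.1 j') * (WH d r' s' x.1 x.2 * WH d p q x.2 k')) := by
    intro x
    simp only [Mmat, kroneckerMap_apply, map_apply, starRingEnd_apply, star_mul', star_star]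
    ring
  rw [Finset.sum_congr rfl fun x _ => step1 x, ← Finset.mul_sum, ← star_sum]
  have step2 : ∑ x : ZMod d × ZMod d,
      star (WH d p q x.1 j') * (WH d r' s' x.1 x.2 * WH d p q x.2 k')
        = ((WH d p q)ᴴ * (WH d r' s' * WH d p q)) j' k' := by
    rw [Fintype.sum_prod_type]
    simp only [mul_apply, conjTranspose_apply, Finset.mul_sum]
  rw [step2, conj1]
  simp only [Matrix.smul_apply, smul_eq_mul, Mmat, star_mul', star_zeta]
  rw [show -(s' * p - q * r') = q * r' - s' * p by ring]
  ring

lemma V_mul_Mmat (d : ℕ) [NeZero d] (p q r s r' s' : ZMod d) :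
    (WH d p q ⊗ₖ (WH d p q).map (starRingEnd ℂ)) * Mmat d r s r' s'
      = zeta d (q * r - s * p) • Mmat d r s r' s' := by
  ext ⟨j, k⟩ ⟨j', k'⟩
  rw [mul_apply]
  have step1 : ∀ x : (ZMod d × ZMod d),
      (WH d p q ⊗ₖ (WH d p q).map (starRingEnd ℂ)) (j, k) x * Mmat d r s r' s' x (j', k')
        = (WH d p q j x.1 * (WH d r s x.1 x.2 * star (WH d p q k x.2)))
            * star (WH d r' s' j' k') := by
    intro x
    simp only [Mmat, kroneckerMap_apply, map_apply, starRingEnd_apply]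
    ring
  rw [Finset.sum_congr rfl fun x _ => step1 x, ← Finset.sum_mul]
  have step2 : ∑ x : ZMod d × ZMod d,
      WH d p q j x.1 * (WH d r s x.1 x.2 * star (WH d p q k x.2))
        = (WH d p q * (WH d r s * (WH d p q)ᴴ)) j k := by
    rw [Fintype.sum_prod_type]
    simp only [mul_apply, conjTranspose_apply, Finset.mul_sum]
  rw [step2, conj2]
  simp only [Matrix.smul_apply, smul_eq_mul, Mmat]
  ring

lemma T_comm (d : ℕ) [NeZero d] (p q r s r' s' : ZMod d) :
    (((WH d r s)ᴴ * WH d r' s') ⊗ₖ Mmat d r s r' s') *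
        (WH d p q ⊗ₖ (WH d p q ⊗ₖ (WH d p q).map (starRingEnd ℂ))) =
      (WH d p q ⊗ₖ (WH d p q ⊗ₖ (WH d p q).map (starRingEnd ℂ))) *
        (((WH d r s)ᴴ * WH d r' s') ⊗ₖ Mmat d r s r' s') := by
  rw [← mul_kronecker_mul, ← mul_kronecker_mul, Mmat_mul_V, V_mul_Mmat]
  rw [Wlem, smul_mul_assoc, mul_smul_comm, WH_mul, WH_mul, smul_smul, smul_smul]
  rw [smul_kronecker, smul_kronecker, kronecker_smul, kronecker_smul, smul_smul, smul_smul]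
  rw [show p + (-r + r') = -r + r' + p by ring, show q + (-s + s') = -s + s' + q by ring]
  congr 1
  simp only [zeta_mul_zeta]
  congr 1
  ring

lemma Pa_eq (d : ℕ) [NeZero d] (a : ZMod d × ZMod d → ℂ) :
    Pa d a = (d : ℂ)⁻¹ • ∑ r : ZMod d, ∑ s : ZMod d, ∑ r' : ZMod d, ∑ s' : ZMod d,
      (a (r, s) * (starRingEnd ℂ) (a (r', s'))) •
        (((WH d r s)ᴴ * WH d r' s') ⊗ₖ Mmat d r s r' s') := by
  ext x y
  simp only [Pa, Matrix.smul_apply, Matrix.sum_apply, Finset.sum_apply, smul_eq_mul,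
    kroneckerMap_apply, Mmat, starRingEnd_apply]
  congr 1
  refine Finset.sum_congr rfl fun r _ => Finset.sum_congr rfl fun s _ =>
    Finset.sum_congr rfl fun r' _ => Finset.sum_congr rfl fun s' _ => ?_
  ring

/-- For normalized coefficients `a`, the operator `P_a` commutes with the covariance
representation `U_{p,q} ⊗ U_{p,q} ⊗ conj(U_{p,q})`. -/
theorem Pa_covariant (d : ℕ) [NeZero d] (a : ZMod d × ZMod d → ℂ)
    (ha : ∑ rs : ZMod d × ZMod d, ‖a rs‖ ^ 2 = 1) :
    ∀ p q : ZMod d,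
      Pa d a * (WH d p q ⊗ₖ (WH d p q ⊗ₖ (WH d p q).map (starRingEnd ℂ))) =
        (WH d p q ⊗ₖ (WH d p q ⊗ₖ (WH d p q).map (starRingEnd ℂ))) * Pa d a := by

  intro p q
  rw [Pa_eq, smul_mul_assoc, mul_smul_comm]
  congr 1
  simp only [Finset.sum_mul, Finset.mul_sum, smul_mul_assoc, mul_smul_comm]
  refine Finset.sum_congr rfl fun r _ => Finset.sum_congr rfl fun s _ =>
    Finset.sum_congr rfl fun r' _ => Finset.sum_congr rfl fun s' _ => ?_
  congr 1
  exact T_comm d p q r s r' s'
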